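/- Let (Ω, ℱ, ℙ) be a probability space and let X_t, ε_t : Ω → ℝ (t ∈ ℤ) be random variables such that, pointwise on Ω, the sequence X follows the AR(p) recursion after time n with noise ε. Fix an integer h ≥ 1 and suppose ε_{n+1}, …, ε_{n+h} are square-integrable, mutually independent, each with mean 0 and variance σ². Then the mean squared h-step prediction error satisfies E[(X_{n+h} − P(h))²] = σ² · Σ_{j=0}^{h−1} a_1(j)², where P(h) is the (pointwise defined) h-step linear predictor. -/

import Mathlib

open MeasureTheory ProbabilityTheory

/-- On a probability space, if the random sequence `X` follows an
AR(p) recursion after time `n` with noise `ε` pointwise, `h ≥ 1`, and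
`ε (n+1), …, ε (n+h)` are square-integrable, mutually independent, each with mean `0`
and variance `σ²`, then the mean squared `h`-step prediction error of the pointwise
linear predictor `P` is `E[(X (n+h) - P h)²] = σ² ∑_{j=0}^{h-1} a₁(j)²`. -/
theorem mse_of_h_step_prediction
    {Ω : Type*} [MeasurableSpace Ω] (μ : Measure Ω) [IsProbabilityMeasure μ]
    (p : ℕ) (hp : 1 ≤ p) (φ : Fin p → ℝ) (σ : ℝ) (hσ : 0 < σ)
    (X ε : ℤ → Ω → ℝ) (n : ℤ)
    (hAR : ∀ ω, ∀ t : ℤ, n < t →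
      X t ω = (∑ i : Fin p, φ i * X (t - ((i : ℕ) + 1 : ℤ)) ω) + ε t ω)
    (P : ℤ → Ω → ℝ)
    (hP0 : ∀ ω, ∀ j : ℤ, j ≤ 0 → P j ω = X (n + j) ω)
    (hPrec : ∀ ω, ∀ h : ℤ, 1 ≤ h →
      P h ω = ∑ i : Fin p, φ i * P (h - ((i : ℕ) + 1 : ℤ)) ω)
    (a1 : ℤ → ℝ)
    (ha1_neg : ∀ j : ℤ, j < 0 → a1 j = 0)
    (ha1_zero : a1 0 = 1)
    (ha1_rec : ∀ h : ℤ, 1 ≤ h → a1 h = ∑ i : Fin p, φ i * a1 (h - ((i : ℕ) + 1 : ℤ)))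
    (h : ℕ) (hh : 1 ≤ h)
    (hL2 : ∀ t : ℤ, n < t → t ≤ n + h → MemLp (ε t) 2 μ)
    (hind : iIndepFun
      (fun j : Fin h => ε (n + 1 + (j : ℕ))) μ)
    (hmean : ∀ t : ℤ, n < t → t ≤ n + h → ∫ ω, ε t ω ∂μ = 0)
    (hvar : ∀ t : ℤ, n < t → t ≤ n + h → variance (ε t) μ = σ ^ 2) :
    ∫ ω, (X (n + h) ω - P (h : ℤ) ω) ^ 2 ∂μ
      = σ ^ 2 * ∑ j ∈ Finset.range h, a1 (j : ℤ) ^ 2 := by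
  -- the pointwise decomposition (proved above as in the scratch lemma, inlined)
  have key : ∀ ω, ∀ m : ℕ, X (n + m) ω - P (m : ℤ) ω
      = ∑ j ∈ Finset.range m, a1 (j : ℤ) * ε (n + m - j) ω := by
    intro ω m
    induction m using Nat.strong_induction_on with
    | _ m IH =>
      rcases Nat.eq_zero_or_pos m with hm | hm
      · subst hm
        simp [hP0 ω 0 le_rfl]
      · have hX := hAR ω (n + m) (by omega)
        have hPm := hPrec ω (m : ℤ) (by exact_mod_cast hm)
        have hterm : ∀ i : Fin p,
            X (n + m - ((i : ℕ) + 1 : ℤ)) ω - P ((m : ℤ) - ((i : ℕ) + 1 : ℤ)) ω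
            = ∑ j ∈ Finset.range (m - ((i : ℕ) + 1)),
                a1 (j : ℤ) * ε (n + m - ((i : ℕ) + 1 : ℤ) - j) ω := by
          intro i
          rcases le_or_gt ((i : ℕ) + 1) m with hle | hlt
          · have hcast : ((m - ((i : ℕ) + 1) : ℕ) : ℤ) = (m : ℤ) - ((i : ℕ) + 1 : ℤ) := by
              push_cast [hle]; ring
            have := IH (m - ((i : ℕ) + 1)) (by omega)
            rw [hcast] at this
            rw [show n + (m : ℤ) - (((i : ℕ) : ℤ) + 1) = n + ((m : ℤ) - (((i : ℕ) : ℤ) + 1)) by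
              ring]
            rw [this]
          · have h0 : (m : ℤ) - ((i : ℕ) + 1 : ℤ) ≤ 0 := by omega
            rw [hP0 ω _ h0]
            rw [show n + (m : ℤ) - (((i : ℕ) : ℤ) + 1) = n + ((m : ℤ) - (((i : ℕ) : ℤ) + 1)) by
              ring]
            rw [show m - ((i : ℕ) + 1) = 0 from by omega]
            simp
        calc X (n + m) ω - P (m : ℤ) ω
            = (∑ i : Fin p, φ i * (X (n + m - ((i : ℕ) + 1 : ℤ)) ω
                - P ((m : ℤ) - ((i : ℕ) + 1 : ℤ)) ω)) + ε (n + m) ω := by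
              rw [hX, hPm]; simp [mul_sub, Finset.sum_sub_distrib]; ring
          _ = (∑ i : Fin p, φ i * ∑ j ∈ Finset.range (m - ((i : ℕ) + 1)),
                a1 (j : ℤ) * ε (n + m - ((i : ℕ) + 1 : ℤ) - j) ω) + ε (n + m) ω := by
              simp_rw [hterm]
          _ = (∑ i : Fin p, φ i * ∑ k ∈ Finset.Ico 1 m,
                a1 ((k : ℤ) - ((i : ℕ) + 1 : ℤ)) * ε (n + m - k) ω) + ε (n + m) ω := by
              congr 1
              apply Finset.sum_congr rfl
              intro i _
              congr 1
              symm
              calc ∑ k ∈ Finset.Ico 1 m, a1 ((k : ℤ) - ((i : ℕ) + 1 : ℤ)) * ε (n + m - k) ω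
                  = ∑ k ∈ Finset.Ico ((i : ℕ) + 1) m,
                      a1 ((k : ℤ) - ((i : ℕ) + 1 : ℤ)) * ε (n + m - k) ω := by
                    refine (Finset.sum_subset (Finset.Ico_subset_Ico (by omega) le_rfl) ?_).symm
                    intro k hk hk'
                    simp only [Finset.mem_Ico] at hk hk'
                    have : (k : ℤ) - ((i : ℕ) + 1 : ℤ) < 0 := by omega
                    rw [ha1_neg _ this, zero_mul]
                _ = ∑ j ∈ Finset.range (m - ((i : ℕ) + 1)),
                      a1 ((((i : ℕ) + 1 + j : ℕ) : ℤ) - ((i : ℕ) + 1 : ℤ))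
                        * ε (n + m - (((i : ℕ) + 1 + j : ℕ) : ℤ)) ω :=
                    Finset.sum_Ico_eq_sum_range _ _ _
                _ = ∑ j ∈ Finset.range (m - ((i : ℕ) + 1)),
                      a1 (j : ℤ) * ε (n + m - ((i : ℕ) + 1 : ℤ) - j) ω := by
                    apply Finset.sum_congr rfl
                    intro j _
                    push_cast
                    ring_nf
          _ = (∑ k ∈ Finset.Ico 1 m,
                a1 (k : ℤ) * ε (n + m - k) ω) + ε (n + m) ω := by
              congr 1
              simp_rw [Finset.mul_sum]
              rw [Finset.sum_comm]
              apply Finset.sum_congr rfl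
              intro k hk
              simp only [Finset.mem_Ico] at hk
              rw [ha1_rec (k : ℤ) (by exact_mod_cast hk.1)]
              rw [Finset.sum_mul]
              apply Finset.sum_congr rfl
              intro i _
              ring
          _ = ∑ j ∈ Finset.range m, a1 (j : ℤ) * ε (n + m - j) ω := by
              rw [Finset.range_eq_Ico, Finset.sum_eq_sum_Ico_succ_bot hm]
              simp [ha1_zero]
              ring
  -- the family of summands
  set Y : ℕ → Ω → ℝ := fun j ω => a1 (j : ℤ) * ε (n + h - j) ω with hY
  have hrange : ∀ j ∈ Finset.range h, n < n + (h : ℤ) - j ∧ n + (h : ℤ) - j ≤ n + h := by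
    intro j hj
    simp only [Finset.mem_range] at hj
    omega
  have memY : ∀ j ∈ Finset.range h, MemLp (Y j) 2 μ := by
    intro j hj
    exact (hL2 _ (hrange j hj).1 (hrange j hj).2).const_mul _
  have hpair : Set.Pairwise ↑(Finset.range h) fun i j => IndepFun (Y i) (Y j) μ := by
    intro i hi j hj hij
    simp only [Finset.coe_range, Set.mem_Iio] at hi hj
    have hidx : ∀ k : ℕ, k < h → n + (h : ℤ) - k = n + 1 + ((h - 1 - k : ℕ) : ℤ) := by
      intro k hk; omega
    have hne : (⟨h - 1 - i, by omega⟩ : Fin h) ≠ ⟨h - 1 - j, by omega⟩ := by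
      simp only [ne_eq, Fin.mk.injEq]
      omega
    have hbase := hind.indepFun hne
    have := hbase.comp (measurable_const_mul (a1 (i : ℤ))) (measurable_const_mul (a1 (j : ℤ)))
    simp only [Function.comp_def] at this
    rw [hY]
    simp only
    rw [hidx i hi, hidx j hj]
    exact this
  have hsum : ∀ ω, X (n + h) ω - P (h : ℤ) ω = (∑ j ∈ Finset.range h, Y j) ω := by
    intro ω
    rw [key ω h]
    simp [hY]
  have hvarY : ∀ j ∈ Finset.range h, variance (Y j) μ = a1 (j : ℤ) ^ 2 * σ ^ 2 := by
    intro j hj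
    rw [hY]
    simp only
    rw [variance_const_mul, hvar _ (hrange j hj).1 (hrange j hj).2]
  have hmeanS : ∫ ω, (∑ j ∈ Finset.range h, Y j) ω ∂μ = 0 := by
    simp only [Finset.sum_apply]
    rw [integral_finset_sum _ (fun j hj => (memY j hj).integrable one_le_two)]
    refine Finset.sum_eq_zero fun j hj => ?_
    rw [hY]
    simp only
    rw [integral_const_mul, hmean _ (hrange j hj).1 (hrange j hj).2, mul_zero]
  have memS : MemLp (∑ j ∈ Finset.range h, Y j) 2 μ := memLp_finset_sum' _ memY
  have hvarS := IndepFun.variance_sum (μ := μ) memY hpair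
  rw [variance_eq_sub memS, hmeanS] at hvarS
  have : ∫ ω, (X (n + h) ω - P (h : ℤ) ω) ^ 2 ∂μ
      = ∫ ω, ((∑ j ∈ Finset.range h, Y j) ^ 2) ω ∂μ := by
    apply integral_congr_ae
    filter_upwards with ω
    rw [Pi.pow_apply, hsum ω]
  rw [this]
  have := hvarS
  simp only [ne_eq, OfNat.ofNat_ne_zero, not_false_eq_true, zero_pow, sub_zero] at this
  rw [this]
  rw [Finset.sum_congr rfl hvarY, ← Finset.sum_mul]
  ring
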